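/- Let f be L_f-smooth and μ_f-strongly convex, and let g: ℝ^d → ℝ^d satisfy ‖∇f(x) − g(x)‖² ≤ ζ² for all x. Then the pair (f − ζ²/μ_f, g) is a (δ, 2L_f, μ_f/2)-oracle of f with δ = (1/(2L_f) + 1/μ_f)ζ²; that is, for all x, y: (μ_f/4)‖x−y‖² ≤ f(x) − (f(y) − ζ²/μ_f) − ⟨g(y), x−y⟩ ≤ L_f‖x−y‖² + (1/(2L_f) + 1/μ_f)ζ². -/

import Mathlib

open RealInnerProductSpace

/-- Descent lemma: a function with Lipschitz gradient admits a quadratic upper bound. -/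
theorem descent_lemma_aux {d : ℕ} (f : EuclideanSpace ℝ (Fin d) → ℝ)
    (f' : EuclideanSpace ℝ (Fin d) → EuclideanSpace ℝ (Fin d))
    (Lf : ℝ)
    (hgrad : ∀ x, HasGradientAt f (f' x) x)
    (hsmooth : ∀ x y : EuclideanSpace ℝ (Fin d), ‖f' x - f' y‖ ≤ Lf * ‖x - y‖) :
    ∀ x y : EuclideanSpace ℝ (Fin d), f x ≤ f y + ⟪f' y, x - y⟫ + Lf / 2 * ‖x - y‖ ^ 2 := by
  intro x y
  set v := x - y with hv
  set c : ℝ → EuclideanSpace ℝ (Fin d) := fun t => y + t • v with hc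
  have hcderiv : ∀ t : ℝ, HasDerivAt c v t := by
    intro t
    have := ((hasDerivAt_id t).smul_const v).const_add y
    rw [one_smul] at this
    exact this
  set ψ : ℝ → ℝ := fun t => f (c t) - t * ⟪f' y, v⟫ - Lf / 2 * t ^ 2 * ‖v‖ ^ 2 with hψ
  have hψderiv : ∀ t : ℝ, HasDerivAt ψ (⟪f' (c t), v⟫ - ⟪f' y, v⟫ - Lf * t * ‖v‖ ^ 2) t := by
    intro t
    have h1 : HasDerivAt (fun t => f (c t)) (⟪f' (c t), v⟫) t := by
      have := ((hgrad (c t)).hasFDerivAt).comp_hasDerivAt t (hcderiv t)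
      simp at this
      exact this
    have h2 : HasDerivAt (fun t : ℝ => t * ⟪f' y, v⟫) (⟪f' y, v⟫) t := by
      simpa using (hasDerivAt_id t).mul_const (⟪f' y, v⟫)
    have h3 : HasDerivAt (fun t : ℝ => Lf / 2 * t ^ 2 * ‖v‖ ^ 2) (Lf * t * ‖v‖ ^ 2) t := by
      have := ((hasDerivAt_pow 2 t).const_mul (Lf / 2)).mul_const (‖v‖ ^ 2)
      have e : Lf * t * ‖v‖ ^ 2 = Lf / 2 * (((2 : ℕ) : ℝ) * t ^ (2 - 1)) * ‖v‖ ^ 2 := by ring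
      rw [e]
      exact this
    exact (h1.sub h2).sub h3
  have hmono : ψ 1 ≤ ψ 0 := by
    have hanti : AntitoneOn ψ (Set.Icc 0 1) := by
      apply antitoneOn_of_deriv_nonpos (convex_Icc 0 1)
      · exact fun t _ => (hψderiv t).continuousAt.continuousWithinAt
      · exact fun t _ => (hψderiv t).differentiableAt.differentiableWithinAt
      · intro t ht
        rw [interior_Icc] at ht
        rw [(hψderiv t).deriv]
        have hb : ⟪f' (c t) - f' y, v⟫ ≤ Lf * t * ‖v‖ ^ 2 := by
          calc ⟪f' (c t) - f' y, v⟫ ≤ ‖f' (c t) - f' y‖ * ‖v‖ := real_inner_le_norm _ _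
            _ ≤ (Lf * ‖c t - y‖) * ‖v‖ := by
                have h := hsmooth (c t) y
                nlinarith [norm_nonneg v]
            _ = Lf * t * ‖v‖ ^ 2 := by
                have : c t - y = t • v := by simp [hc]
                rw [this, norm_smul]
                simp [abs_of_pos ht.1]
                ring
        have := inner_sub_left (𝕜 := ℝ) (f' (c t)) (f' y) v
        linarith [hb, this.symm ▸ hb]
    exact hanti (by norm_num) (by norm_num) (by norm_num)
  have h0 : ψ 0 = f y := by simp [hψ, hc]
  have hx : y + v = x := by rw [hv]; abel
  have h1 : ψ 1 = f x - ⟪f' y, v⟫ - Lf / 2 * ‖v‖ ^ 2 := by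
    simp [hψ, hc, hx]
  rw [h0, h1] at hmono
  linarith

/-- An absolutely ζ-inexact gradient of a smooth strongly convex f yields a
((1/(2L_f)+1/μ_f)ζ², 2L_f, μ_f/2)-oracle of f. -/
theorem inexact_gradient_is_dLmu_oracle {d : ℕ}
    (f : EuclideanSpace ℝ (Fin d) → ℝ)
    (f' g : EuclideanSpace ℝ (Fin d) → EuclideanSpace ℝ (Fin d))
    (Lf μf ζ : ℝ) (hLf : 0 < Lf) (hμf : 0 < μf) (hζ : 0 ≤ ζ)
    (hgrad : ∀ x, HasGradientAt f (f' x) x)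
    -- L_f-smoothness
    (hsmooth : ∀ x y : EuclideanSpace ℝ (Fin d), ‖f' x - f' y‖ ≤ Lf * ‖x - y‖)
    -- μ_f-strong convexity
    (hsc : ∀ x y : EuclideanSpace ℝ (Fin d),
      f y + ⟪f' y, x - y⟫ + μf / 2 * ‖x - y‖ ^ 2 ≤ f x)
    -- inexactness of g
    (hinexact : ∀ x, ‖f' x - g x‖ ^ 2 ≤ ζ ^ 2) :
    ∀ x y : EuclideanSpace ℝ (Fin d),
      μf / 4 * ‖x - y‖ ^ 2 ≤ f x - (f y - ζ ^ 2 / μf) - ⟪g y, x - y⟫ ∧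
      f x - (f y - ζ ^ 2 / μf) - ⟪g y, x - y⟫ ≤
        Lf * ‖x - y‖ ^ 2 + (1 / (2 * Lf) + 1 / μf) * ζ ^ 2 := by
  intro x y
  set r := ‖x - y‖ with hr
  have hrpos : 0 ≤ r := norm_nonneg _
  have henorm : ‖f' y - g y‖ ≤ ζ := by
    nlinarith [hinexact y, norm_nonneg (f' y - g y)]
  have habs : |⟪f' y - g y, x - y⟫| ≤ ζ * r := by
    calc |⟪f' y - g y, x - y⟫| ≤ ‖f' y - g y‖ * ‖x - y‖ := abs_real_inner_le_norm _ _
      _ ≤ ζ * r := by apply mul_le_mul_of_nonneg_right henorm hrpos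
  have hsplit : ⟪f' y - g y, x - y⟫ = ⟪f' y, x - y⟫ - ⟪g y, x - y⟫ :=
    inner_sub_left (𝕜 := ℝ) _ _ _
  have young1 : ζ * r - μf / 4 * r ^ 2 ≤ ζ ^ 2 / μf := by
    rw [le_div_iff₀ hμf]
    nlinarith [sq_nonneg (μf * r - 2 * ζ)]
  have young2 : ζ * r - Lf / 2 * r ^ 2 ≤ ζ ^ 2 / (2 * Lf) := by
    rw [le_div_iff₀ (by positivity)]
    nlinarith [sq_nonneg (Lf * r - ζ)]
  have hdesc := descent_lemma_aux f f' Lf hgrad hsmooth x y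
  have hsc' := hsc x y
  have habs1 := abs_le.mp habs
  have hsum : (1 / (2 * Lf) + 1 / μf) * ζ ^ 2 = ζ ^ 2 / (2 * Lf) + ζ ^ 2 / μf := by
    ring
  constructor
  · linarith [habs1.1, habs1.2]
  · rw [hsum]
    linarith [habs1.1, habs1.2]
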